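/- arXiv:2409.01165 — 2 statements merged into one kernel-verified Lean document; each statement's English description precedes it below -/
import Mathlib

section
/- Let ρ_j (j ∈ ℤ₊) be positive integers and ψ^m_j ∈ L₂ for m = 1,…,ρ_j. The family Ψ = {S^k_j ψ^m_j : j ∈ ℤ₊, m = 1,…,ρ_j, k ∈ R_j} forms a Parseval wavelet frame in L₂ if and only if (i) Σ_{j=0}^∞ Σ_{m=1}^{ρ_j} 2^j |ψ̂^m_j(n)|² = 1 for every n ∈ ℤ, and (ii) Σ_{q=0}^{j} 2^q Σ_{m=1}^{ρ_q} conj(ψ̂^m_q(n)) · ψ̂^m_q(2^j k + n) = 0 for every odd integer k, every n ∈ ℤ and every j ∈ ℤ₊. -/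
open MeasureTheory Complex Finset Filter ComplexConjugate
open scoped ENNReal

noncomputable section

instance : Fact ((0:ℝ) < 1) := ⟨one_pos⟩

/-- The space `L₂` of 1-periodic square-integrable complex functions, realized as
`Lp ℂ 2` over the additive circle of length 1 with normalized Haar measure. -/
abbrev PL2 : Type := Lp ℂ 2 (@AddCircle.haarAddCircle (1 : ℝ) _)

/-- Fourier coefficient `f̂(n) = ∫₀¹ f(x) e^{-2πinx} dx`. -/
def fCoeff (f : PL2) (n : ℤ) : ℂ := fourierCoeff (f : AddCircle (1 : ℝ) → ℂ) n

/-- Inner product `⟨f, S^k_j g⟩ = ∫₀¹ f(x) conj(g(x + 2^{-j} k)) dx`. -/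
def shiftInner (f g : PL2) (j : ℕ) (k : ℤ) : ℂ :=
  ∫ x : AddCircle (1 : ℝ),
    f x * conj (g (x + (((2:ℝ)^(-(j:ℤ)) * (k:ℝ) : ℝ) : AddCircle (1 : ℝ))))
    ∂AddCircle.haarAddCircle

/-- `R_j = {-2^{j-1}+1, …, 2^{j-1}}` for `j ≥ 1` and `R₀ = {0}`. -/
def Rset (j : ℕ) : Finset ℤ :=
  if j = 0 then {0} else Finset.Icc (-(2^(j-1) : ℤ) + 1) (2^(j-1))

/-- The system `{S^k_j ψ^m_j : j ∈ ℤ₊, 1 ≤ m ≤ ρ_j, k ∈ R_j}` is a Parseval wavelet frame. -/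
def IsParsevalFrame (ρ : ℕ → ℕ) (ψ : ℕ → ℕ → PL2) : Prop :=
  ∀ f : PL2, ‖f‖^2 =
    ∑' j : ℕ, ∑ m ∈ Finset.Icc 1 (ρ j), ∑ k ∈ Rset j,
      (‖shiftInner f (ψ j m) j k‖)^2

local notation "⟪" x ", " y "⟫" => @inner ℂ _ _ x y

def cpt (j : ℕ) (k : ℤ) : AddCircle (1:ℝ) := (((2:ℝ)^(-(j:ℤ)) * (k:ℝ) : ℝ) : AddCircle (1:ℝ))

def Sop (j : ℕ) (k : ℤ) (g : PL2) : PL2 :=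
  Lp.compMeasurePreserving (fun x => x + cpt j k)
    (measurePreserving_add_right AddCircle.haarAddCircle (cpt j k)) g

lemma Sop_coe (j : ℕ) (k : ℤ) (g : PL2) :
    (Sop j k g : AddCircle (1:ℝ) → ℂ) =ᵐ[AddCircle.haarAddCircle] fun x => g (x + cpt j k) :=
  Lp.coeFn_compMeasurePreserving g _

lemma shiftInner_eq (f g : PL2) (j : ℕ) (k : ℤ) :
    shiftInner f g j k = ⟪Sop j k g, f⟫ := by
  rw [MeasureTheory.L2.inner_def, shiftInner]
  apply integral_congr_ae
  filter_upwards [Sop_coe j k g] with x hx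
  rw [RCLike.inner_apply, hx, mul_comm]
  exact mul_comm _ _

lemma fCoeff_Sop (j : ℕ) (k : ℤ) (g : PL2) (n : ℤ) :
    fCoeff (Sop j k g) n = fourier n (cpt j k) * fCoeff g n := by
  have h1 : fCoeff (Sop j k g) n
      = ∫ t : AddCircle (1:ℝ), fourier (-n) t • (g (t + cpt j k) : ℂ) ∂AddCircle.haarAddCircle := by
    apply integral_congr_ae
    filter_upwards [Sop_coe j k g] with x hx
    rw [hx]
  rw [h1]
  have hmp := measurePreserving_add_right (@AddCircle.haarAddCircle (1:ℝ) _) (cpt j k)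
  have hint : ∫ t : AddCircle (1:ℝ), fourier (-n) t • (g (t + cpt j k) : ℂ) ∂AddCircle.haarAddCircle
      = ∫ t : AddCircle (1:ℝ), fourier (-n) (t - cpt j k) • (g t : ℂ) ∂AddCircle.haarAddCircle := by
    rw [← MeasurePreserving.integral_comp hmp (MeasurableEquiv.addRight (cpt j k)).measurableEmbedding
      (fun t => fourier (-n) (t - cpt j k) • (g t : ℂ))]
    simp
  rw [hint]
  have : ∀ t : AddCircle (1:ℝ), fourier (-n) (t - cpt j k) = fourier n (cpt j k) * fourier (-n) t := by
    intro t
    have h2 : (-n) • (t - cpt j k) = n • cpt j k + (-n) • t := by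
      rw [smul_sub, neg_smul, neg_smul]
      abel
    rw [fourier_apply, fourier_apply, fourier_apply, h2, AddCircle.toCircle_add]
    simp
  simp_rw [this, mul_smul]
  rw [integral_smul]
  rfl


def eb : HilbertBasis ℤ ℂ PL2 := @fourierBasis 1 _

lemma fCoeff_eq_repr (f : PL2) (n : ℤ) : eb.repr f n = fCoeff f n := fourierBasis_repr f n

lemma inner_eb (f : PL2) (n : ℤ) : ⟪eb n, f⟫ = fCoeff f n := by
  rw [← fCoeff_eq_repr, eb.repr_apply_apply]

lemma norm_eb (n : ℤ) : ‖(eb n : PL2)‖ = 1 := eb.orthonormal.1 n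

lemma abs_fourier (n : ℤ) (x : AddCircle (1:ℝ)) : ‖fourier n x‖ = 1 := by
  rw [fourier_apply]
  exact Circle.norm_coe _

-- geometric sum helper
lemma sum_zpow_Icc (u : ℂ) (hu : u ≠ 0) (a : ℤ) (N : ℕ) :
    ∑ k ∈ Finset.Icc a (a + N - 1), u ^ k = u ^ a * ∑ i ∈ Finset.range N, u ^ i := by
  rw [Finset.mul_sum]
  refine Finset.sum_nbij' (fun k => (k - a).toNat) (fun i => a + (i:ℤ)) ?_ ?_ ?_ ?_ ?_
  · intro k hk
    simp only [Finset.mem_Icc] at hk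
    simp only [Finset.mem_range]
    omega
  · intro i hi
    simp only [Finset.mem_range] at hi
    simp only [Finset.mem_Icc]
    omega
  · intro k hk
    simp only [Finset.mem_Icc] at hk
    omega
  · intro i hi
    simp only [Finset.mem_range] at hi
    omega
  · intro k hk
    simp only [Finset.mem_Icc] at hk
    rw [← zpow_natCast u, ← zpow_add₀ hu]
    congr 1
    omega

lemma Rset_eq (j : ℕ) (hj : j ≠ 0) :
    Rset j = Finset.Icc (-(2^(j-1) : ℤ) + 1) ((-(2^(j-1) : ℤ) + 1) + ((2^j : ℕ) : ℤ) - 1) := by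
  rw [Rset, if_neg hj]
  congr 1
  have h1 : ((2^j : ℕ) : ℤ) = 2^(j-1) * 2 := by
    push_cast
    rw [← pow_succ]
    congr 1
    omega
  omega

lemma Rset_card (j : ℕ) : (Rset j).card = 2^j := by
  by_cases hj : j = 0
  · subst hj; rfl
  · rw [Rset_eq j hj, Int.card_Icc]
    have h1 : (-(2^(j-1) : ℤ) + 1) + ((2^j : ℕ) : ℤ) - 1 + 1 - (-(2^(j-1):ℤ)+1) = ((2^j : ℕ) : ℤ) := by
      ring
    rw [h1, Int.toNat_natCast]

lemma fourier_cpt (d : ℤ) (j : ℕ) (k : ℤ) :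
    (fourier d (cpt j k) : ℂ) = Complex.exp (2 * Real.pi * Complex.I * d / 2^j) ^ k := by
  rw [cpt, fourier_coe_apply, ← Complex.exp_int_mul]
  congr 1
  push_cast [zpow_neg, zpow_natCast]
  field_simp

lemma sum_fourier_Rset (j : ℕ) (d : ℤ) :
    ∑ k ∈ Rset j, (fourier d (cpt j k) : ℂ) = if (2^j : ℤ) ∣ d then ((2:ℂ)^j) else 0 := by
  set u : ℂ := Complex.exp (2 * Real.pi * Complex.I * d / 2^j) with hu_def
  have hu0 : u ≠ 0 := Complex.exp_ne_zero _
  have huN : u ^ (2^j : ℕ) = 1 := by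
    rw [hu_def, ← Complex.exp_nat_mul, ← Complex.exp_int_mul_two_pi_mul_I d]
    congr 1
    have h2 : ((2:ℂ))^j ≠ 0 := pow_ne_zero _ two_ne_zero
    push_cast
    field_simp
  have hcase : (2^j : ℤ) ∣ d ↔ u = 1 := by
    constructor
    · rintro ⟨e, rfl⟩
      rw [hu_def, ← Complex.exp_int_mul_two_pi_mul_I e]
      congr 1
      have h2 : ((2:ℂ))^j ≠ 0 := pow_ne_zero _ two_ne_zero
      push_cast
      field_simp
    · intro hu1
      rw [hu_def, Complex.exp_eq_one_iff] at hu1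
      obtain ⟨m, hm⟩ := hu1
      refine ⟨m, ?_⟩
      have h2 : ((2:ℂ))^j ≠ 0 := pow_ne_zero _ two_ne_zero
      have h2πI : (2 * (Real.pi:ℂ) * Complex.I) ≠ 0 := by
        simp [Real.pi_ne_zero, Complex.I_ne_zero]
      rw [div_eq_iff h2] at hm
      have hd' : (2*(Real.pi:ℂ)*Complex.I) * (d:ℂ)
          = (2*(Real.pi:ℂ)*Complex.I) * ((2^j * m : ℤ):ℂ) := by
        push_cast
        linear_combination hm
      have hd := mul_left_cancel₀ h2πI hd'
      exact Int.cast_injective hd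
  have hRsum : ∑ k ∈ Rset j, (fourier d (cpt j k) : ℂ)
      = u ^ (-(2^(j-1) : ℤ) + 1) * ∑ i ∈ Finset.range (2^j), u ^ (i:ℕ) := by
    by_cases hj : j = 0
    · subst hj
      rw [Rset, if_pos rfl, Finset.sum_singleton, fourier_cpt]
      norm_num
    · rw [Rset_eq j hj]
      simp_rw [fourier_cpt d j, ← hu_def]
      rw [sum_zpow_Icc u hu0]
  rw [hRsum]
  by_cases hdvd : (2^j : ℤ) ∣ d
  · rw [if_pos hdvd]
    have hu1 : u = 1 := hcase.mp hdvd
    simp [hu1]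
  · rw [if_neg hdvd]
    have hu1 : u ≠ 1 := fun h => hdvd (hcase.mpr h)
    rw [geom_sum_eq hu1, huN]
    simp

section Part3
variable (ρ : ℕ → ℕ) (ψ : ℕ → ℕ → PL2)

def aC (n : ℤ) (j m : ℕ) (k : ℤ) : ℂ := ⟪Sop j k (ψ j m), (eb n : PL2)⟫

lemma aC_eq (n : ℤ) (j m : ℕ) (k : ℤ) :
    aC ψ n j m k = conj ((fourier n (cpt j k) : ℂ) * fCoeff (ψ j m) n) := by
  rw [aC, ← inner_conj_symm, inner_eb, fCoeff_Sop]

lemma abs_aC (n : ℤ) (j m : ℕ) (k : ℤ) :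
    ‖aC ψ n j m k‖ = ‖fCoeff (ψ j m) n‖ := by
  rw [aC_eq, Complex.norm_conj, norm_mul, abs_fourier, one_mul]

lemma shiftInner_eb (n : ℤ) (j m : ℕ) (k : ℤ) :
    shiftInner (eb n) (ψ j m) j k = aC ψ n j m k := by
  rw [shiftInner_eq, aC]

lemma pair_sum (n n' : ℤ) (j : ℕ) :
    ∑ m ∈ Finset.Icc 1 (ρ j), ∑ k ∈ Rset j, aC ψ n j m k * conj (aC ψ n' j m k)
    = (if (2^j:ℤ) ∣ (n' - n) then ((2:ℂ)^j) else 0)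
      * ∑ m ∈ Finset.Icc 1 (ρ j), conj (fCoeff (ψ j m) n) * fCoeff (ψ j m) n' := by
  rw [Finset.mul_sum]
  apply Finset.sum_congr rfl
  intro m _
  have hpt : ∀ k : ℤ, aC ψ n j m k * conj (aC ψ n' j m k)
      = (fourier (n' - n) (cpt j k) : ℂ) * (conj (fCoeff (ψ j m) n) * fCoeff (ψ j m) n') := by
    intro k
    rw [aC_eq, aC_eq]
    have h1 : (fourier (n' - n) (cpt j k) : ℂ)
        = conj (fourier n (cpt j k) : ℂ) * (fourier n' (cpt j k) : ℂ) := by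
      rw [← fourier_neg, ← fourier_add]
      congr 1
      ring
    rw [h1]
    simp only [map_mul, Complex.conj_conj]
    ring
  simp_rw [hpt]
  rw [← Finset.sum_mul, sum_fourier_Rset]

lemma diag_sum (n : ℤ) (j : ℕ) :
    ∑ m ∈ Finset.Icc 1 (ρ j), ∑ k ∈ Rset j, (‖aC ψ n j m k‖)^2
    = ∑ m ∈ Finset.Icc 1 (ρ j), (2:ℝ)^j * (‖fCoeff (ψ j m) n‖)^2 := by
  apply Finset.sum_congr rfl
  intro m _
  simp_rw [abs_aC]
  rw [Finset.sum_const, Rset_card, nsmul_eq_mul]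
  push_cast
  ring

lemma dvd_pow_odd (j' j : ℕ) (k : ℤ) (hk : Odd k) :
    (2^j' : ℤ) ∣ 2^j * k ↔ j' ≤ j := by
  constructor
  · intro hdvd
    by_contra hlt
    push_neg at hlt
    obtain ⟨c, hc⟩ := hdvd
    obtain ⟨t, rfl⟩ := hk
    have hj' : j' = j + 1 + (j' - j - 1) := by omega
    rw [hj'] at hc
    have h2j : (2:ℤ)^j ≠ 0 := pow_ne_zero _ two_ne_zero
    have hc' : 2 * t + 1 = 2 * (2^(j' - j - 1) * c) := by
      have : (2:ℤ)^j * (2*t+1) = 2^j * (2 * (2^(j' - j - 1) * c)) := by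
        rw [hc]; ring
      exact mul_left_cancel₀ h2j this
    omega
  · intro hle
    exact Dvd.dvd.mul_right (pow_dvd_pow 2 hle) k

lemma exists_odd_factor : ∀ N : ℕ, ∀ d : ℤ, d.natAbs ≤ N → d ≠ 0 →
    ∃ j : ℕ, ∃ k : ℤ, Odd k ∧ d = 2^j * k := by
  intro N
  induction N with
  | zero =>
    intro d h hd
    exact absurd (Int.natAbs_eq_zero.mp (Nat.le_zero.mp h)) hd
  | succ N ih =>
    intro d h hd
    rcases Int.even_or_odd d with he | ho
    · obtain ⟨e, he⟩ := he
      have he' : d = 2 * e := by omega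
      have hne : e ≠ 0 := by
        intro h0; rw [h0] at he'; simp at he'; exact hd he'
      have hna : d.natAbs = 2 * e.natAbs := by
        rw [he', Int.natAbs_mul]; rfl
      have hpos : 1 ≤ e.natAbs := Int.natAbs_pos.mpr hne
      have : e.natAbs ≤ N := by omega
      obtain ⟨j, k, hk, hjk⟩ := ih e this hne
      exact ⟨j+1, k, hk, by rw [he', hjk]; ring⟩
    · exact ⟨0, d, ho, by ring⟩

end Part3

section Part4
variable (ρ : ℕ → ℕ) (ψ : ℕ → ℕ → PL2)

lemma normSq_add' (a b : ℂ) :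
    Complex.normSq (a + b) = Complex.normSq a + Complex.normSq b + 2 * (a * conj b).re := by
  simp [Complex.normSq_apply, Complex.add_re, Complex.add_im, Complex.mul_re, Complex.mul_im,
    Complex.conj_re, Complex.conj_im]
  ring

lemma normSq_add_I (a b : ℂ) :
    Complex.normSq (a + Complex.I * b) = Complex.normSq a + Complex.normSq b + 2 * (a * conj b).im := by
  simp [Complex.normSq_apply, Complex.add_re, Complex.add_im, Complex.mul_re, Complex.mul_im,
    Complex.conj_re, Complex.conj_im, Complex.I_re, Complex.I_im]
  ring

-- the diagonal sums
lemma frame_diag (hF : IsParsevalFrame ρ ψ) (n : ℤ) :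
    ∑' j : ℕ, ∑ m ∈ Finset.Icc 1 (ρ j), (2:ℝ)^j * (‖fCoeff (ψ j m) n‖)^2 = 1 := by
  have h := hF (eb n)
  rw [norm_eb, one_pow] at h
  refine Eq.trans ?_ h.symm
  refine tsum_congr fun j => ?_
  rw [← diag_sum]
  apply Finset.sum_congr rfl
  intro m _
  apply Finset.sum_congr rfl
  intro k _
  rw [shiftInner_eb]

lemma summable_diag (hF : IsParsevalFrame ρ ψ) (n : ℤ) :
    Summable (fun j : ℕ => ∑ m ∈ Finset.Icc 1 (ρ j), ∑ k ∈ Rset j,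
      (‖aC ψ n j m k‖)^2) := by
  by_contra hs
  have h := hF (eb n)
  rw [norm_eb, one_pow] at h
  have heq : (∑' j : ℕ, ∑ m ∈ Finset.Icc 1 (ρ j), ∑ k ∈ Rset j,
      (‖shiftInner (eb n) (ψ j m) j k‖)^2) = 0 := by
    apply tsum_eq_zero_of_not_summable
    intro hsum
    apply hs
    apply hsum.congr
    intro j
    apply Finset.sum_congr rfl
    intro m _
    apply Finset.sum_congr rfl
    intro k _
    rw [shiftInner_eb]
  rw [heq] at h
  norm_num at h

lemma shiftInner_add (f f' g : PL2) (j : ℕ) (k : ℤ) :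
    shiftInner (f + f') g j k = shiftInner f g j k + shiftInner f' g j k := by
  rw [shiftInner_eq, shiftInner_eq, shiftInner_eq, inner_add_right]

lemma shiftInner_smul (c : ℂ) (f g : PL2) (j : ℕ) (k : ℤ) :
    shiftInner (c • f) g j k = c * shiftInner f g j k := by
  rw [shiftInner_eq, shiftInner_eq, inner_smul_right]

lemma frame_cross (hF : IsParsevalFrame ρ ψ) (k : ℤ) (hk : Odd k) (n : ℤ) (j0 : ℕ) :
    ∑ q ∈ Finset.range (j0+1), (2:ℂ)^q *
      ∑ m ∈ Finset.Icc 1 (ρ q),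
        conj (fCoeff (ψ q m) n) * fCoeff (ψ q m) (2^j0 * k + n) = 0 := by
  set n' : ℤ := 2^j0 * k + n with hn'
  have hk0 : k ≠ 0 := by
    rintro rfl
    simp [Int.odd_iff] at hk
  have hd0 : (2:ℤ)^j0 * k ≠ 0 := mul_ne_zero (pow_ne_zero _ two_ne_zero) hk0
  have hdne : n ≠ n' := by
    intro hcon
    apply hd0
    omega
  set A : ℕ → ℝ := fun j => ∑ m ∈ Finset.Icc 1 (ρ j), ∑ k' ∈ Rset j,
    (‖aC ψ n j m k'‖)^2 with hA_def
  set B : ℕ → ℝ := fun j => ∑ m ∈ Finset.Icc 1 (ρ j), ∑ k' ∈ Rset j,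
    (‖aC ψ n' j m k'‖)^2 with hB_def
  set C : ℕ → ℂ := fun j => ∑ m ∈ Finset.Icc 1 (ρ j), ∑ k' ∈ Rset j,
    aC ψ n j m k' * conj (aC ψ n' j m k') with hC_def
  have SA := summable_diag ρ ψ hF n
  have SB := summable_diag ρ ψ hF n'
  -- tsum A = 1
  have hF_eb : ∀ nn : ℤ, (1:ℝ) = ∑' j : ℕ, ∑ m ∈ Finset.Icc 1 (ρ j), ∑ k' ∈ Rset j,
      (‖aC ψ nn j m k'‖)^2 := by
    intro nn
    have h := hF (eb nn)
    rw [norm_eb, one_pow] at h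
    rw [h]
    refine tsum_congr fun j => ?_
    exact Finset.sum_congr rfl fun m _ => Finset.sum_congr rfl fun k' _ => by
      rw [shiftInner_eb]
  have hAt : ∑' j, A j = 1 := (hF_eb n).symm
  have hBt : ∑' j, B j = 1 := (hF_eb n').symm
  -- bound on C
  have hCb : ∀ j, ‖C j‖ ≤ (A j + B j)/2 := by
    intro j
    have h1 : ‖C j‖ ≤ ∑ m ∈ Finset.Icc 1 (ρ j), ∑ k' ∈ Rset j,
        ‖aC ψ n j m k' * conj (aC ψ n' j m k')‖ := by
      calc ‖C j‖ ≤ ∑ m ∈ Finset.Icc 1 (ρ j),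
            ‖∑ k' ∈ Rset j, aC ψ n j m k' * conj (aC ψ n' j m k')‖ := by
              simpa using
                norm_sum_le (Finset.Icc 1 (ρ j))
                  (fun m => ∑ k' ∈ Rset j, aC ψ n j m k' * conj (aC ψ n' j m k'))
        _ ≤ _ := by
              apply Finset.sum_le_sum
              intro m _
              simpa using
                norm_sum_le (Rset j) (fun k' => aC ψ n j m k' * conj (aC ψ n' j m k'))
    refine h1.trans ?_
    calc ∑ m ∈ Finset.Icc 1 (ρ j), ∑ k' ∈ Rset j,
          ‖aC ψ n j m k' * conj (aC ψ n' j m k')‖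
        ≤ ∑ m ∈ Finset.Icc 1 (ρ j), ∑ k' ∈ Rset j,
          ((‖aC ψ n j m k'‖)^2 + (‖aC ψ n' j m k'‖)^2)/2 := by
          apply Finset.sum_le_sum
          intro m _
          apply Finset.sum_le_sum
          intro k' _
          rw [norm_mul, Complex.norm_conj]
          nlinarith [sq_nonneg (‖aC ψ n j m k'‖ - ‖aC ψ n' j m k'‖),
            norm_nonneg (aC ψ n j m k'), norm_nonneg (aC ψ n' j m k')]
      _ = (A j + B j)/2 := by
          rw [hA_def, hB_def]
          simp only [← Finset.sum_add_distrib, Finset.sum_div]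
  have SC : Summable C := by
    apply Summable.of_norm_bounded (g := fun j => (A j + B j)/2) ((SA.add SB).div_const 2)
    intro j
    simpa using hCb j
  have SCre : Summable (fun j => (C j).re) := by
    apply Summable.of_norm_bounded (g := fun j => (A j + B j)/2) ((SA.add SB).div_const 2)
    intro j
    refine le_trans ?_ (hCb j)
    simpa [Real.norm_eq_abs] using Complex.abs_re_le_norm (C j)
  have SCim : Summable (fun j => (C j).im) := by
    apply Summable.of_norm_bounded (g := fun j => (A j + B j)/2) ((SA.add SB).div_const 2)
    intro j
    refine le_trans ?_ (hCb j)
    simpa [Real.norm_eq_abs] using Complex.abs_im_le_norm (C j)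
  -- the two polarization identities
  have hinner0 : ⟪(eb n : PL2), (eb n' : PL2)⟫ = 0 := eb.orthonormal.2 hdne
  -- identity 1 : real parts
  have hre : ∑' j, (C j).re = 0 := by
    have hnorm : ‖(eb n : PL2) + (eb n' : PL2)‖^2 = 2 := by
      rw [@norm_add_sq ℂ, hinner0, norm_eb, norm_eb]
      norm_num
    have hexp := hF ((eb n : PL2) + (eb n' : PL2))
    rw [hnorm] at hexp
    have hterm : ∀ j, (∑ m ∈ Finset.Icc 1 (ρ j), ∑ k' ∈ Rset j,
        (‖shiftInner ((eb n : PL2) + (eb n' : PL2)) (ψ j m) j k'‖)^2)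
        = A j + B j + 2 * (C j).re := by
      intro j
      rw [hA_def, hB_def, hC_def]
      simp only [← Finset.sum_add_distrib]
      rw [Complex.re_sum, Finset.mul_sum, ← Finset.sum_add_distrib]
      apply Finset.sum_congr rfl
      intro m _
      rw [Complex.re_sum, Finset.mul_sum, ← Finset.sum_add_distrib]
      apply Finset.sum_congr rfl
      intro k' _
      rw [shiftInner_add, shiftInner_eb, shiftInner_eb]
      rw [Complex.sq_norm, Complex.sq_norm, Complex.sq_norm, normSq_add']
    rw [tsum_congr hterm] at hexp
    have hsplit : ∑' j, (A j + B j + 2*(C j).re)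
        = (∑' j, A j) + (∑' j, B j) + 2 * ∑' j, (C j).re := by
      rw [Summable.tsum_add (SA.add SB) (SCre.mul_left 2), Summable.tsum_add SA SB, tsum_mul_left]
    rw [hsplit, hAt, hBt] at hexp
    linarith
  -- identity 2 : imaginary parts
  have him : ∑' j, (C j).im = 0 := by
    have hnorm : ‖(eb n : PL2) + Complex.I • (eb n' : PL2)‖^2 = 2 := by
      rw [@norm_add_sq ℂ, inner_smul_right, hinner0, norm_smul, norm_eb, norm_eb]
      norm_num [Complex.norm_I]
    have hexp := hF ((eb n : PL2) + Complex.I • (eb n' : PL2))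
    rw [hnorm] at hexp
    have hterm : ∀ j, (∑ m ∈ Finset.Icc 1 (ρ j), ∑ k' ∈ Rset j,
        (‖shiftInner ((eb n : PL2) + Complex.I • (eb n' : PL2)) (ψ j m) j k'‖)^2)
        = A j + B j + 2 * (C j).im := by
      intro j
      rw [hA_def, hB_def, hC_def]
      simp only [← Finset.sum_add_distrib]
      rw [Complex.im_sum, Finset.mul_sum, ← Finset.sum_add_distrib]
      apply Finset.sum_congr rfl
      intro m _
      rw [Complex.im_sum, Finset.mul_sum, ← Finset.sum_add_distrib]
      apply Finset.sum_congr rfl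
      intro k' _
      rw [shiftInner_add, shiftInner_smul, shiftInner_eb, shiftInner_eb]
      rw [Complex.sq_norm, Complex.sq_norm, Complex.sq_norm, normSq_add_I]
    rw [tsum_congr hterm] at hexp
    have hsplit : ∑' j, (A j + B j + 2*(C j).im)
        = (∑' j, A j) + (∑' j, B j) + 2 * ∑' j, (C j).im := by
      rw [Summable.tsum_add (SA.add SB) (SCim.mul_left 2), Summable.tsum_add SA SB, tsum_mul_left]
    rw [hsplit, hAt, hBt] at hexp
    linarith
  have hCt : ∑' j, C j = 0 := by
    have h1 : (∑' j, C j).re = 0 := by rw [Complex.re_tsum SC]; exact hre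
    have h2 : (∑' j, C j).im = 0 := by rw [Complex.im_tsum SC]; exact him
    exact Complex.ext h1 h2
  -- evaluate C
  have hCj : ∀ q : ℕ, C q = (if (2^q:ℤ) ∣ (n' - n) then ((2:ℂ)^q) else 0)
      * ∑ m ∈ Finset.Icc 1 (ρ q), conj (fCoeff (ψ q m) n) * fCoeff (ψ q m) n' :=
    fun q => pair_sum ρ ψ n n' q
  have hsub : n' - n = 2^j0 * k := by omega
  have hzero : ∀ q ∉ Finset.range (j0+1), C q = 0 := by
    intro q hq
    rw [Finset.mem_range] at hq
    rw [hCj q, hsub, if_neg]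
    · ring
    · rw [dvd_pow_odd q j0 k hk]
      omega
  have hfin : ∑' j, C j = ∑ q ∈ Finset.range (j0+1), C q := tsum_eq_sum hzero
  rw [hfin] at hCt
  rw [← hCt]
  apply Finset.sum_congr rfl
  intro q hq
  rw [Finset.mem_range] at hq
  rw [hCj q, hsub, if_pos]
  rw [dvd_pow_odd q j0 k hk]
  omega

end Part4

section Part5
variable (ρ : ℕ → ℕ) (ψ : ℕ → ℕ → PL2)

abbrev Idx : Type := Σ j : ℕ, (↥(Finset.Icc 1 (ρ j)) × ↥(Rset j))

def aI (n : ℤ) (i : Idx ρ) : ℂ := aC ψ n i.1 i.2.1 i.2.2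

lemma fiber_sum {M : Type} [AddCommMonoid M] [TopologicalSpace M] [T2Space M]
    (j : ℕ) (F : ℕ → ℤ → M) :
    (∑' p : (↥(Finset.Icc 1 (ρ j)) × ↥(Rset j)), F p.1 p.2)
      = ∑ m ∈ Finset.Icc 1 (ρ j), ∑ k ∈ Rset j, F m k := by
  rw [tsum_fintype, Fintype.sum_prod_type]
  rw [← Finset.sum_coe_sort (Finset.Icc 1 (ρ j))]
  apply Finset.sum_congr rfl
  intro m _
  rw [← Finset.sum_coe_sort (Rset j)]

lemma rpow_two_eq (x : ℝ) : x ^ ((2:ℝ≥0∞)).toReal = x ^ (2:ℕ) := by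
  rw [ENNReal.toReal_ofNat]
  rw [show ((2:ℝ)) = ((2:ℕ):ℝ) by norm_num, Real.rpow_natCast]

lemma backward
    (h1 : ∀ n : ℤ, ∑' j : ℕ, ∑ m ∈ Finset.Icc 1 (ρ j),
        (2:ℝ)^j * (‖fCoeff (ψ j m) n‖)^2 = 1)
    (h2 : ∀ k : ℤ, Odd k → ∀ n : ℤ, ∀ j : ℕ,
        ∑ q ∈ Finset.range (j+1), (2:ℂ)^q *
          ∑ m ∈ Finset.Icc 1 (ρ q),
            conj (fCoeff (ψ q m) n) * fCoeff (ψ q m) (2^j * k + n) = 0) :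
    IsParsevalFrame ρ ψ := by
  classical
  -- summability of the diagonal sums
  have hdiagSum : ∀ n : ℤ, Summable (fun j : ℕ => ∑ m ∈ Finset.Icc 1 (ρ j),
      (2:ℝ)^j * (‖fCoeff (ψ j m) n‖)^2) := by
    intro n
    by_contra hs
    have h1n := h1 n
    rw [tsum_eq_zero_of_not_summable hs] at h1n
    norm_num at h1n
  -- each fiber sum of |aI n|^2
  have hfib : ∀ n : ℤ, ∀ j : ℕ,
      (∑' p : (↥(Finset.Icc 1 (ρ j)) × ↥(Rset j)), (‖aI ρ ψ n ⟨j, p⟩‖)^2)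
      = ∑ m ∈ Finset.Icc 1 (ρ j), (2:ℝ)^j * (‖fCoeff (ψ j m) n‖)^2 := by
    intro n j
    have e1 : (∑' p : (↥(Finset.Icc 1 (ρ j)) × ↥(Rset j)), (‖aI ρ ψ n ⟨j, p⟩‖)^2)
        = ∑' p : (↥(Finset.Icc 1 (ρ j)) × ↥(Rset j)),
            (fun m k => (‖aC ψ n j m k‖)^2) (p.1:ℕ) (p.2:ℤ) := rfl
    rw [e1, fiber_sum ρ (j := j) (F := fun m k => (‖aC ψ n j m k‖)^2)]
    exact diag_sum ρ ψ n j
  have hsum_sq : ∀ n : ℤ, Summable (fun i : Idx ρ => (‖aI ρ ψ n i‖)^2) := by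
    intro n
    refine (summable_sigma_of_nonneg (fun i => sq_nonneg _)).mpr ⟨?_, ?_⟩
    · intro j
      exact Summable.of_finite
    · apply ((hdiagSum n).congr)
      intro j
      exact (hfib n j).symm
  have hval : ∀ n : ℤ, (∑' i : Idx ρ, (‖aI ρ ψ n i‖)^2) = 1 := by
    intro n
    rw [Summable.tsum_sigma (hsum_sq n)]
    rw [← h1 n]
    exact tsum_congr fun j => hfib n j
  -- membership in ℓ²
  have hmem : ∀ n : ℤ, Memℓp (aI ρ ψ n) 2 := by
    intro n
    apply memℓp_gen
    apply ((hsum_sq n).congr)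
    intro i
    rw [← rpow_two_eq]
  set U : ℤ → lp (fun _ : Idx ρ => ℂ) 2 := fun n => ⟨aI ρ ψ n, hmem n⟩ with hU_def
  have hUapp : ∀ n i, (U n : Idx ρ → ℂ) i = aI ρ ψ n i := fun n i => rfl
  -- norms
  have hUnorm : ∀ n, ‖U n‖ = 1 := by
    intro n
    have h := lp.norm_rpow_eq_tsum (p := 2) (by norm_num) (U n)
    simp_rw [rpow_two_eq] at h
    have h2 : ‖U n‖ ^ (2:ℕ) = 1 := by
      rw [h, ← hval n]
    have hnn : (0:ℝ) ≤ ‖U n‖ := norm_nonneg _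
    have hfac : (‖U n‖ - 1) * (‖U n‖ + 1) = 0 := by nlinarith [h2]
    rcases mul_eq_zero.mp hfac with hc | hc
    · linarith
    · linarith
  -- orthogonality
  have hUinner : ∀ n n' : ℤ, n ≠ n' → (inner ℂ (U n) (U n') : ℂ) = 0 := by
    intro n n' hne
    have hS := lp.summable_inner (𝕜 := ℂ) (U n) (U n')
    have hS' : Summable (fun i : Idx ρ => conj (aI ρ ψ n i) * aI ρ ψ n' i) := by
      apply hS.congr
      intro i
      rw [RCLike.inner_apply, hUapp, hUapp]
      ring
    have hinner : (inner ℂ (U n) (U n') : ℂ) = ∑' i : Idx ρ, conj (aI ρ ψ n i) * aI ρ ψ n' i := by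
      rw [lp.inner_eq_tsum]
      apply tsum_congr
      intro i
      rw [RCLike.inner_apply, hUapp, hUapp]
      ring
    rw [hinner, Summable.tsum_sigma hS']
    -- fiber values
    have hfibC : ∀ j : ℕ, (∑' p : (↥(Finset.Icc 1 (ρ j)) × ↥(Rset j)),
        conj (aI ρ ψ n ⟨j, p⟩) * aI ρ ψ n' ⟨j, p⟩)
        = (if (2^j:ℤ) ∣ (n - n') then ((2:ℂ)^j) else 0)
          * ∑ m ∈ Finset.Icc 1 (ρ j), conj (fCoeff (ψ j m) n') * fCoeff (ψ j m) n := by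
      intro j
      have e1 : (∑' p : (↥(Finset.Icc 1 (ρ j)) × ↥(Rset j)),
          conj (aI ρ ψ n ⟨j, p⟩) * aI ρ ψ n' ⟨j, p⟩)
          = ∑' p : (↥(Finset.Icc 1 (ρ j)) × ↥(Rset j)),
            (fun (m:ℕ) (k:ℤ) => conj (aC ψ n j m k) * aC ψ n' j m k) (p.1:ℕ) (p.2:ℤ) := rfl
      rw [e1, fiber_sum ρ (j := j) (F := fun m k => conj (aC ψ n j m k) * aC ψ n' j m k)]
      rw [← pair_sum ρ ψ n' n j]
      apply Finset.sum_congr rfl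
      intro m _
      apply Finset.sum_congr rfl
      intro k _
      ring
    have hd0 : n - n' ≠ 0 := fun hcon => hne (by omega)
    obtain ⟨j0, k, hk, hjk⟩ := exists_odd_factor (n - n').natAbs (n - n') le_rfl hd0
    have hzero : ∀ j ∉ Finset.range (j0+1), (∑' p : (↥(Finset.Icc 1 (ρ j)) × ↥(Rset j)),
        conj (aI ρ ψ n ⟨j, p⟩) * aI ρ ψ n' ⟨j, p⟩) = 0 := by
      intro j hj
      rw [Finset.mem_range] at hj
      rw [hfibC j, hjk, if_neg]
      · ring
      · rw [dvd_pow_odd j j0 k hk]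
        omega
    rw [tsum_eq_sum hzero]
    have hfin : ∑ j ∈ Finset.range (j0+1), (∑' p : (↥(Finset.Icc 1 (ρ j)) × ↥(Rset j)),
        conj (aI ρ ψ n ⟨j, p⟩) * aI ρ ψ n' ⟨j, p⟩)
        = ∑ q ∈ Finset.range (j0+1), (2:ℂ)^q *
            ∑ m ∈ Finset.Icc 1 (ρ q), conj (fCoeff (ψ q m) n') * fCoeff (ψ q m) (2^j0 * k + n') := by
      apply Finset.sum_congr rfl
      intro q hq
      rw [Finset.mem_range] at hq
      rw [hfibC q, hjk, if_pos]
      · rw [show n = 2^j0*k + n' by linarith [hjk]]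
      · rw [dvd_pow_odd q j0 k hk]
        omega
    rw [hfin]
    exact h2 k hk n' j0
  have hUorth : Orthonormal ℂ U := by
    rw [orthonormal_iff_ite]
    intro n n'
    by_cases h : n = n'
    · subst h
      rw [if_pos rfl, @inner_self_eq_norm_sq_to_K ℂ, hUnorm]
      norm_num
    · rw [if_neg h]
      exact hUinner n n' h
  -- the isometry
  have hW0 := hUorth.orthogonalFamily
  set W0 : lp (fun _ : ℤ => ℂ) 2 →ₗᵢ[ℂ] lp (fun _ : Idx ρ => ℂ) 2 :=
    hW0.linearIsometry with hW0_def
  set W : PL2 →ₗᵢ[ℂ] lp (fun _ : Idx ρ => ℂ) 2 := W0.comp eb.repr.toLinearIsometry with hW_def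
  have hWe : ∀ n : ℤ, W (eb n) = U n := by
    intro n
    show W0 (eb.repr (eb n)) = U n
    rw [eb.repr_self]
    rw [OrthogonalFamily.linearIsometry_apply_single]
    rw [LinearIsometry.toSpanSingleton_apply, one_smul]
  -- coordinate identity
  have hcoord : ∀ (i : Idx ρ) (f : PL2), (W f : Idx ρ → ℂ) i
      = ⟪Sop i.1 i.2.2 (ψ i.1 i.2.1), f⟫ := by
    intro i
    set L1 : PL2 →ₗ[ℂ] ℂ :=
      { toFun := fun f => (W f : Idx ρ → ℂ) i
        map_add' := by
          intro a b
          show (W (a + b) : Idx ρ → ℂ) i = (W a : Idx ρ → ℂ) i + (W b : Idx ρ → ℂ) i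
          rw [W.map_add]
          rfl
        map_smul' := by
          intro c a
          show (W (c • a) : Idx ρ → ℂ) i = c • (W a : Idx ρ → ℂ) i
          rw [W.map_smul]
          rfl } with hL1
    have hL1cont : Continuous L1 := by
      apply AddMonoidHomClass.continuous_of_bound L1 1
      intro f
      rw [one_mul]
      calc ‖L1 f‖ ≤ ‖W f‖ := lp.norm_apply_le_norm (by norm_num) (W f) i
        _ = ‖f‖ := LinearIsometry.norm_map W f
    set L1' : PL2 →L[ℂ] ℂ := ⟨L1, hL1cont⟩ with hL1'
    set L2 : PL2 →L[ℂ] ℂ := innerSL ℂ (Sop i.1 i.2.2 (ψ i.1 i.2.1)) with hL2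
    have heq : L1' = L2 := by
      apply ContinuousLinearMap.ext_on (s := Set.range (eb : ℤ → PL2))
      · rw [Submodule.dense_iff_topologicalClosure_eq_top]
        exact eb.dense_span
      · rintro x ⟨n, rfl⟩
        show (W (eb n) : Idx ρ → ℂ) i = ⟪Sop i.1 i.2.2 (ψ i.1 i.2.1), (eb n : PL2)⟫
        rw [hWe n, hUapp]
        rfl
    intro f
    have := congrFun (congrArg DFunLike.coe heq) f
    exact this
  -- conclude
  intro f
  have hnorm : ‖f‖^2 = ‖W f‖^2 := by rw [LinearIsometry.norm_map]
  have hWf_sum : Summable (fun i : Idx ρ => (‖(W f : Idx ρ → ℂ) i‖)^2) := by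
    have := Memℓp.summable (p := 2) (by norm_num) (lp.memℓp (W f))
    apply this.congr
    intro i
    rw [rpow_two_eq]
  have hnorm2 : ‖W f‖^2 = ∑' i : Idx ρ, (‖(W f : Idx ρ → ℂ) i‖)^2 := by
    have h := lp.norm_rpow_eq_tsum (p := 2) (by norm_num) (W f)
    rw [ENNReal.toReal_ofNat] at h
    rw [show ((‖W f‖)^2 : ℝ) = ‖W f‖ ^ (2:ℝ) by rw [show ((2:ℝ)) = ((2:ℕ):ℝ) by norm_num, Real.rpow_natCast]]
    rw [h]
    apply tsum_congr
    intro i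
    rw [show ((2:ℝ)) = ((2:ℕ):ℝ) by norm_num, Real.rpow_natCast]
  rw [hnorm, hnorm2, Summable.tsum_sigma hWf_sum]
  apply tsum_congr
  intro j
  have hfsum : (∑' p : (↥(Finset.Icc 1 (ρ j)) × ↥(Rset j)),
      (‖(W f : Idx ρ → ℂ) ⟨j, p⟩‖)^2)
      = ∑' p : (↥(Finset.Icc 1 (ρ j)) × ↥(Rset j)),
        (‖shiftInner f (ψ j (p.1:ℕ)) j (p.2:ℤ)‖)^2 := by
    apply tsum_congr
    intro p
    rw [hcoord ⟨j, p⟩ f, ← shiftInner_eq]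
  rw [hfsum, fiber_sum ρ (j := j) (F := fun m k => (‖shiftInner f (ψ j m) j k‖)^2)]

end Part5


theorem parseval_frame_characterization
    (ρ : ℕ → ℕ) (hρ : ∀ j, 0 < ρ j) (ψ : ℕ → ℕ → PL2) :
    IsParsevalFrame ρ ψ ↔
      ((∀ n : ℤ,
          ∑' j : ℕ, ∑ m ∈ Finset.Icc 1 (ρ j),
            (2:ℝ)^j * (‖fCoeff (ψ j m) n‖)^2 = 1) ∧
       (∀ k : ℤ, Odd k → ∀ n : ℤ, ∀ j : ℕ,
          ∑ q ∈ Finset.range (j+1), (2:ℂ)^q *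
            ∑ m ∈ Finset.Icc 1 (ρ q),
              conj (fCoeff (ψ q m) n) * fCoeff (ψ q m) (2^j * k + n) = 0)) := by
  constructor
  · intro hF
    exact ⟨frame_diag ρ ψ hF, fun k hk n j => frame_cross ρ ψ hF k hk n j⟩
  · rintro ⟨h1, h2⟩
    exact backward ρ ψ h1 h2

end
end

section
/- Suppose functions φ_j ∈ L₂ (j ∈ ℕ) satisfy the refinement equation with masks â_{j+1} ∈ S(2^{j+1}), and for each j ∈ ℤ₊ the functions ψ^m_j ∈ L₂ (m = 1,…,ρ_j, ρ_j positive integers) are defined by the wavelet equation with masks b̂^m_{j+1} ∈ S(2^{j+1}). If Ψ = {S^k_j ψ^m_j : j ∈ ℤ₊, m = 1,…,ρ_j, k ∈ R_j} forms a Parseval wavelet frame in L₂, then for every n ∈ ℤ there exists j ∈ ℕ such that φ̂_j(n) ≠ 0 and Σ_{m=1}^{ρ_{j−1}} |b̂^m_j(n)|² ≠ 0. -/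
open MeasureTheory Complex Finset Filter ComplexConjugate

noncomputable section

/-- The inner product of the exponential `e_n` with a shift of `g` equals, up to a
unimodular factor, the conjugate of the `n`-th Fourier coefficient of `g`. -/
lemma expShiftInner_eq (g : PL2) (n : ℤ) (c : AddCircle (1:ℝ)) :
    ∫ x : AddCircle (1 : ℝ),
      ((fourierLp 2 n : PL2) : AddCircle (1:ℝ) → ℂ) x * conj (g (x + c))
      ∂AddCircle.haarAddCircle
    = conj ((fourier (-n) (-c) : ℂ) * fourierCoeff (g : AddCircle (1:ℝ) → ℂ) n) := by
  have inner_calc : (∫ x : AddCircle (1:ℝ), fourier (-n) x * g (x + c)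
      ∂AddCircle.haarAddCircle)
      = (fourier (-n) (-c) : ℂ) * fourierCoeff (g : AddCircle (1:ℝ) → ℂ) n := by
    calc (∫ x : AddCircle (1:ℝ), fourier (-n) x * g (x + c) ∂AddCircle.haarAddCircle)
        = ∫ x : AddCircle (1:ℝ),
            (fun y => (fourier (-n) (-c) : ℂ) * (fourier (-n) y * g y)) (x + c)
            ∂AddCircle.haarAddCircle := by
          refine integral_congr_ae (Filter.Eventually.of_forall fun x => ?_)
          simp only
          rw [← mul_assoc]
          congr 1
          simp_rw [fourier_apply, ← Circle.coe_mul, ← AddCircle.toCircle_add, ← smul_add]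
          rw [show -c + (x + c) = x from by abel]
      _ = ∫ y : AddCircle (1:ℝ),
            (fourier (-n) (-c) : ℂ) * (fourier (-n) y * g y) ∂AddCircle.haarAddCircle :=
          integral_add_right_eq_self
            (fun y => (fourier (-n) (-c) : ℂ) * (fourier (-n) y * g y)) c
      _ = (fourier (-n) (-c) : ℂ) *
            ∫ y : AddCircle (1:ℝ), fourier (-n) y * g y ∂AddCircle.haarAddCircle :=
          integral_const_mul _ _
      _ = (fourier (-n) (-c) : ℂ) * fourierCoeff (g : AddCircle (1:ℝ) → ℂ) n := by
          rw [fourierCoeff]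
          simp [smul_eq_mul]
  calc (∫ x : AddCircle (1 : ℝ),
        ((fourierLp 2 n : PL2) : AddCircle (1:ℝ) → ℂ) x * conj (g (x + c))
        ∂AddCircle.haarAddCircle)
      = ∫ x : AddCircle (1:ℝ), conj (fourier (-n) x * g (x + c))
          ∂AddCircle.haarAddCircle := by
        refine integral_congr_ae ?_
        filter_upwards [coeFn_fourierLp (T := 1) 2 n] with x hx
        rw [hx, map_mul]
        congr 1
        rw [← fourier_neg, neg_neg]
    _ = conj (∫ x : AddCircle (1:ℝ), fourier (-n) x * g (x + c)
          ∂AddCircle.haarAddCircle) := integral_conj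
    _ = conj ((fourier (-n) (-c) : ℂ) * fourierCoeff (g : AddCircle (1:ℝ) → ℂ) n) := by
        rw [inner_calc]

theorem frame_implies_nonvanishing_level
    (ρ : ℕ → ℕ) (hρ : ∀ j, 0 < ρ j)
    (φ : ℕ → PL2) (ψ : ℕ → ℕ → PL2)
    (a : ℕ → ℤ → ℂ) (b : ℕ → ℕ → ℤ → ℂ)
    (ha_per : ∀ j : ℕ, 1 ≤ j → ∀ n : ℤ, a (j+1) (n + 2^(j+1)) = a (j+1) n)
    (hb_per : ∀ j : ℕ, ∀ m, 1 ≤ m → m ≤ ρ j → ∀ n : ℤ,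
        b (j+1) m (n + 2^(j+1)) = b (j+1) m n)
    (href : ∀ j : ℕ, 1 ≤ j → ∀ n : ℤ,
        fCoeff (φ j) n = (Real.sqrt 2 : ℂ) * a (j+1) n * fCoeff (φ (j+1)) n)
    (hwav : ∀ j : ℕ, ∀ m, 1 ≤ m → m ≤ ρ j → ∀ n : ℤ,
        fCoeff (ψ j m) n = (Real.sqrt 2 : ℂ) * b (j+1) m n * fCoeff (φ (j+1)) n)
    (hframe : IsParsevalFrame ρ ψ) :
    ∀ n : ℤ, ∃ j : ℕ, 1 ≤ j ∧ fCoeff (φ j) n ≠ 0 ∧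
      (∑ m ∈ Finset.Icc 1 (ρ (j-1)), (‖b j m n‖)^2) ≠ 0 := by
  intro n
  set f : PL2 := fourierLp 2 n with hf
  have hnorm : ‖f‖ = 1 := orthonormal_fourier.1 n
  have h1 : (1:ℝ) = ∑' j : ℕ, ∑ m ∈ Finset.Icc 1 (ρ j), ∑ k ∈ Rset j,
      (‖shiftInner f (ψ j m) j k‖)^2 := by
    have := hframe f
    rwa [hnorm, one_pow] at this
  -- find a nonzero term
  obtain ⟨j, hj⟩ : ∃ j : ℕ, (∑ m ∈ Finset.Icc 1 (ρ j), ∑ k ∈ Rset j,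
      (‖shiftInner f (ψ j m) j k‖)^2) ≠ 0 := by
    by_contra h
    push_neg at h
    simp only [h, tsum_zero] at h1
    exact one_ne_zero h1
  obtain ⟨m, hm, hmk⟩ : ∃ m ∈ Finset.Icc 1 (ρ j), (∑ k ∈ Rset j,
      (‖shiftInner f (ψ j m) j k‖)^2) ≠ 0 := by
    by_contra h
    push_neg at h
    exact hj (Finset.sum_eq_zero h)
  obtain ⟨k, _, hk⟩ : ∃ k ∈ Rset j,
      (‖shiftInner f (ψ j m) j k‖)^2 ≠ 0 := by
    by_contra h
    push_neg at h
    exact hmk (Finset.sum_eq_zero h)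
  have hs : shiftInner f (ψ j m) j k ≠ 0 := by
    intro h0
    exact hk (by rw [h0, norm_zero]; norm_num)
  -- shift inner product nonzero forces the Fourier coefficient of ψ to be nonzero
  have hC : fCoeff (ψ j m) n ≠ 0 := by
    intro h0
    apply hs
    rw [shiftInner, hf, expShiftInner_eq]
    rw [show fourierCoeff ((ψ j m : PL2) : AddCircle (1:ℝ) → ℂ) n = 0 from h0]
    simp
  obtain ⟨hm1, hm2⟩ := Finset.mem_Icc.mp hm
  rw [hwav j m hm1 hm2 n] at hC
  have hb : b (j+1) m n ≠ 0 := fun h0 => hC (by rw [h0]; ring)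
  have hφ : fCoeff (φ (j+1)) n ≠ 0 := fun h0 => hC (by rw [h0]; ring)
  refine ⟨j+1, Nat.le_add_left 1 j, hφ, ?_⟩
  simp only [Nat.add_sub_cancel]
  have hpos : 0 < ∑ m' ∈ Finset.Icc 1 (ρ j), (‖b (j+1) m' n‖)^2 :=
    Finset.sum_pos' (fun i _ => by positivity)
      ⟨m, hm, pow_pos (norm_pos_iff.mpr hb) 2⟩
  exact ne_of_gt hpos

end
end
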